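/- (Casimir decomposition for weight modules with locally nilpotent e.) Let V be a complex vector space equipped with linear endomorphisms E, F, H satisfying the sl₂-relations H∘E − E∘H = 2E, H∘F − F∘H = −2F, E∘F − F∘E = H. Assume V is spanned by eigenvectors of H (V is a weight module) and that E acts locally nilpotently (for every v ∈ V there exists N with E^N(v) = 0). Let Ω = H² + 2H + 4FE. Then V has a Casimir decomposition: V is spanned by generalized eigenvectors of Ω, i.e., the supremum over c ∈ ℂ of the generalized eigenspaces ⋃_{i≥1} ker((Ω − c)^i) equals V. -/

import Mathlib

/-- (Casimir decomposition for weight modules with locally nilpotent `e`.)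
Let `V` be a complex vector space with endomorphisms `E`, `F`, `H` satisfying
the `sl₂`-relations.  If `V` is spanned by eigenvectors of `H` (a weight
module) and `E` acts locally nilpotently, then for `Ω = H² + 2H + 4FE` the
supremum over `c ∈ ℂ` of the generalized eigenspaces `⋃_{i≥1} ker((Ω - c)^i)`
equals `V`: `V` has a Casimir decomposition. -/
private lemma casimir_ker_mono {V : Type*} [AddCommGroup V] [Module ℂ V]
    (g : Module.End ℂ V) {m n : ℕ} (h : m ≤ n) :
    LinearMap.ker (g ^ m) ≤ LinearMap.ker (g ^ n) := by
  intro x hx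
  obtain ⟨k, rfl⟩ := Nat.exists_eq_add_of_le h
  rw [LinearMap.mem_ker] at *
  rw [add_comm, pow_add, Module.End.mul_apply, hx, map_zero]

private lemma casimir_directed {V : Type*} [AddCommGroup V] [Module ℂ V]
    (f : Module.End ℂ V) (c' : ℂ) :
    Directed (· ≤ ·) fun i : ℕ => LinearMap.ker ((f - c' • 1) ^ (i + 1)) := by
  intro i j
  exact ⟨max i j, casimir_ker_mono _ (by omega), casimir_ker_mono _ (by omega)⟩

/-- If `T` commutes with `f`, then `T` preserves the sum of generalized eigenspaces. -/
private lemma casimir_mapT {V : Type*} [AddCommGroup V] [Module ℂ V]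
    (f T : Module.End ℂ V) (hcomm : f * T = T * f) (v : V)
    (hv : v ∈ ⨆ (c' : ℂ) (i : ℕ), LinearMap.ker ((f - c' • 1) ^ (i + 1))) :
    T v ∈ ⨆ (c' : ℂ) (i : ℕ), LinearMap.ker ((f - c' • 1) ^ (i + 1)) := by
  refine Submodule.iSup_induction
    (motive := fun w => T w ∈ ⨆ (c' : ℂ) (i : ℕ), LinearMap.ker ((f - c' • 1) ^ (i + 1)))
    _ hv ?_ (by simp only [map_zero]; exact Submodule.zero_mem _) ?_
  · intro c' w hw
    rw [Submodule.mem_iSup_of_directed _ (casimir_directed f c')] at hw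
    obtain ⟨i, hi⟩ := hw
    have hc : Commute ((f - c' • 1) ^ (i + 1)) T :=
      (Commute.sub_left hcomm ((Commute.one_left T).smul_left c')).pow_left _
    have hk : T w ∈ LinearMap.ker ((f - c' • 1) ^ (i + 1)) := by
      rw [LinearMap.mem_ker, ← Module.End.mul_apply, hc.eq, Module.End.mul_apply,
        LinearMap.mem_ker.mp hi, map_zero]
    exact le_iSup (fun c'' => ⨆ i : ℕ, LinearMap.ker ((f - c'' • 1) ^ (i + 1))) c'
      (le_iSup (fun i : ℕ => LinearMap.ker ((f - c' • 1) ^ (i + 1))) i hk)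
  · intro x y hx hy
    rw [map_add]
    exact Submodule.add_mem _ hx hy

private lemma casimir_pull {V : Type*} [AddCommGroup V] [Module ℂ V]
    (f : Module.End ℂ V) (c : ℂ) (v : V)
    (hv : (f - c • 1) v ∈ ⨆ (c' : ℂ) (i : ℕ), LinearMap.ker ((f - c' • 1) ^ (i + 1))) :
    v ∈ ⨆ (c' : ℂ) (i : ℕ), LinearMap.ker ((f - c' • 1) ^ (i + 1)) := by
  set S := ⨆ (c' : ℂ) (i : ℕ), LinearMap.ker ((f - c' • 1) ^ (i + 1)) with hS
  have hGS : ∀ c' : ℂ, (⨆ i : ℕ, LinearMap.ker ((f - c' • 1) ^ (i + 1))) ≤ S :=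
    fun c' => le_iSup (fun c'' => ⨆ i : ℕ, LinearMap.ker ((f - c'' • 1) ^ (i + 1))) c'
  have claimA : ∀ w ∈ S, ∃ u ∈ S,
      w - (f - c • 1) u ∈ ⨆ i : ℕ, LinearMap.ker ((f - c • 1) ^ (i + 1)) := by
    intro w hw
    refine Submodule.iSup_induction
      (motive := fun w => ∃ u ∈ S,
        w - (f - c • 1) u ∈ ⨆ i : ℕ, LinearMap.ker ((f - c • 1) ^ (i + 1)))
      _ hw ?_ ⟨0, Submodule.zero_mem _, by simp⟩ ?_
    · intro c' w hw
      rw [Submodule.mem_iSup_of_directed _ (casimir_directed f c')] at hw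
      obtain ⟨i, hi⟩ := hw
      by_cases hcc : c' = c
      · subst hcc
        have : w - (f - c' • 1) 0 ∈ ⨆ i : ℕ, LinearMap.ker ((f - c' • 1) ^ (i + 1)) := by
          simpa using le_iSup (fun i : ℕ => LinearMap.ker ((f - c' • 1) ^ (i + 1))) i hi
        exact ⟨0, Submodule.zero_mem _, this⟩
      · set g := f - c' • 1 with hg
        set a := c - c' with ha
        have ha0 : a ≠ 0 := sub_ne_zero.mpr (Ne.symm hcc)
        have hgw : (g ^ (i + 1)) w = 0 := LinearMap.mem_ker.mp hi
        have hfc : f - c • 1 = g - a • 1 := by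
          rw [hg, ha, sub_smul]; abel
        have step : ∀ j : ℕ, (g - a • 1) ((a ^ (j + 1))⁻¹ • (g ^ j) w)
            = (a ^ (j + 1))⁻¹ • (g ^ (j + 1)) w - (a ^ j)⁻¹ • (g ^ j) w := by
          intro j
          rw [LinearMap.sub_apply, LinearMap.map_smul, LinearMap.smul_apply,
            Module.End.one_apply, smul_smul]
          congr 2
          · rw [pow_succ', Module.End.mul_apply]
          · field_simp
            ring
        have htel : (g - a • 1) (∑ j ∈ Finset.range (i + 1), (a ^ (j + 1))⁻¹ • (g ^ j) w)
            = -w := by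
          rw [map_sum]
          simp only [step]
          rw [Finset.sum_range_sub (fun j => (a ^ j)⁻¹ • (g ^ j) w), hgw]
          simp
        refine ⟨-(∑ j ∈ Finset.range (i + 1), (a ^ (j + 1))⁻¹ • (g ^ j) w), ?_, ?_⟩
        · apply hGS c'
          apply le_iSup (fun i : ℕ => LinearMap.ker ((f - c' • 1) ^ (i + 1))) i
          rw [LinearMap.mem_ker, ← hg, map_neg, neg_eq_zero, map_sum]
          refine Finset.sum_eq_zero fun j hj => ?_
          rw [map_smul, ← Module.End.mul_apply, ← pow_add]
          have hz : (g ^ (i + 1 + j)) w = 0 :=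
            LinearMap.mem_ker.mp (casimir_ker_mono g (m := i + 1) (n := i + 1 + j)
              (by omega) (LinearMap.mem_ker.mpr hgw))
          rw [hz, smul_zero]
        · have hzero : w - (f - c • 1)
              (-(∑ j ∈ Finset.range (i + 1), (a ^ (j + 1))⁻¹ • (g ^ j) w)) = 0 := by
            rw [hfc, map_neg, htel]; abel
          rw [hzero]
          exact Submodule.zero_mem _
    · rintro x y ⟨u1, hu1, h1⟩ ⟨u2, hu2, h2⟩
      refine ⟨u1 + u2, Submodule.add_mem _ hu1 hu2, ?_⟩
      have heq : x + y - (f - c • 1) (u1 + u2)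
          = (x - (f - c • 1) u1) + (y - (f - c • 1) u2) := by
        rw [map_add]; abel
      rw [heq]
      exact Submodule.add_mem _ h1 h2
  obtain ⟨u, huS, hG⟩ := claimA _ hv
  rw [Submodule.mem_iSup_of_directed _ (casimir_directed f c)] at hG
  obtain ⟨i, hi⟩ := hG
  have hvu : v - u ∈ LinearMap.ker ((f - c • 1) ^ (i + 1 + 1)) := by
    rw [LinearMap.mem_ker, pow_succ, Module.End.mul_apply, map_sub]
    exact LinearMap.mem_ker.mp hi
  have hvuS : v - u ∈ S :=
    hGS c (le_iSup (fun i : ℕ => LinearMap.ker ((f - c • 1) ^ (i + 1))) (i + 1) hvu)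
  have : v = (v - u) + u := by abel
  rw [this]
  exact Submodule.add_mem _ hvuS huS
theorem stmt19 (V : Type*) [AddCommGroup V] [Module ℂ V]
    (E F H : Module.End ℂ V)
    (hHE : H * E - E * H = (2 : ℂ) • E)
    (hHF : H * F - F * H = (-2 : ℂ) • F)
    (hEF : E * F - F * E = H)
    (hweight : Submodule.span ℂ {v : V | ∃ μ : ℂ, H v = μ • v} = ⊤)
    (hnilp : ∀ v : V, ∃ N : ℕ, (E ^ N) v = 0) :
    (⨆ (c : ℂ) (i : ℕ),
        LinearMap.ker (((H * H + (2 : ℂ) • H + (4 : ℂ) • (F * E)) -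
          c • (1 : Module.End ℂ V)) ^ (i + 1))) = ⊤ := by
  set f := H * H + (2 : ℂ) • H + (4 : ℂ) • (F * E) with hf
  -- `f` commutes with `F`
  have hcomm : f * F = F * f := by
    have key : f * F - F * f
        = H * (H*F - F*H) + (H*F - F*H) * H + (2:ℂ) • (H*F - F*H)
          + (4:ℂ) • (F * (E*F - F*E)) := by
      rw [hf]
      simp only [mul_sub, sub_mul, smul_sub, mul_add, add_mul, smul_mul_assoc,
        mul_smul_comm, smul_smul, mul_assoc]
      module
    rw [hHF, hEF] at key
    have key2 : H * ((-2:ℂ) • F) + ((-2:ℂ) • F) * H + (2:ℂ) • ((-2:ℂ) • F)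
        + (4:ℂ) • (F * H) = (-2:ℂ) • (H*F - F*H) + (-4:ℂ) • F := by
      simp only [mul_sub, sub_mul, smul_sub, mul_add, add_mul, smul_mul_assoc,
        mul_smul_comm, smul_smul, mul_assoc]
      module
    rw [key2, hHF] at key
    have hz : ((-2:ℂ)) • ((-2:ℂ) • F) + (-4:ℂ) • F = (0 : Module.End ℂ V) := by
      simp only [smul_smul]; norm_num
    rw [hz] at key
    exact sub_eq_zero.mp key
  rw [eq_top_iff, ← hweight, Submodule.span_le]
  have key0 : True := trivial
  have key : ∀ N : ℕ, ∀ (μ : ℂ) (v : V), H v = μ • v → (E ^ N) v = 0 →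
      v ∈ ⨆ (c : ℂ) (i : ℕ), LinearMap.ker ((f - c • 1) ^ (i + 1)) := by
    intro N
    induction N with
    | zero =>
      intro μ v _ h0
      have : v = 0 := by simpa using h0
      rw [this]
      exact Submodule.zero_mem _
    | succ N ih =>
      intro μ v hμ hE
      have hEv : H (E v) = (μ + 2) • E v := by
        have h1 := DFunLike.congr_fun hHE v
        simp only [LinearMap.sub_apply, Module.End.mul_apply, LinearMap.smul_apply] at h1
        rw [hμ, map_smul] at h1
        have : H (E v) = μ • E v + (2:ℂ) • E v := by
          rw [← h1]; abel
        rw [this, add_smul]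
      have hEN : (E ^ N) (E v) = 0 := by
        rw [pow_succ, Module.End.mul_apply] at hE
        exact hE
      have hmem := ih (μ + 2) (E v) hEv hEN
      have hFmem : F (E v) ∈ ⨆ (c : ℂ) (i : ℕ), LinearMap.ker ((f - c • 1) ^ (i + 1)) :=
        casimir_mapT f F hcomm _ hmem
      apply casimir_pull f (μ * μ + 2 * μ) v
      have heq : (f - (μ * μ + 2 * μ) • 1) v = (4:ℂ) • F (E v) := by
        rw [hf]
        simp only [LinearMap.sub_apply, LinearMap.add_apply, Module.End.mul_apply,
          LinearMap.smul_apply, Module.End.one_apply, hμ, map_smul, smul_smul, add_smul]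
        module
      rw [heq]
      exact Submodule.smul_mem _ _ hFmem
  rintro v ⟨μ, hμ⟩
  obtain ⟨N, hN⟩ := hnilp v
  exact key N μ v hμ hN
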